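/- Let n ≥ 1 and let K ⊆ ℝⁿ be a nonempty compact convex set. Then K has constant width 1, i.e. h_K(u) + h_K(−u) = 1 for every unit vector u, if and only if K^c = K. -/

import Mathlib

open Metric Set

open scoped RealInnerProductSpace

set_option maxHeartbeats 1000000

noncomputable section

/-- The `c`-dual of a set `A ⊆ ℝⁿ`. -/
def cDual {n : ℕ} (A : Set (EuclideanSpace ℝ (Fin n))) : Set (EuclideanSpace ℝ (Fin n)) :=
  {y | ∀ x ∈ A, ‖x - y‖ ≤ 1}

/-- The support function of a set: `h_K(u) = sup_{x ∈ K} ⟨x, u⟩`. -/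
def suppFn {n : ℕ} (K : Set (EuclideanSpace ℝ (Fin n))) (u : EuclideanSpace ℝ (Fin n)) : ℝ :=
  sSup ((fun x => (inner ℝ x u : ℝ)) '' K)

section CoreGeometry

variable {E : Type*} [NormedAddCommGroup E] [InnerProductSpace ℝ E]

lemma coreB (x a b w : E) (ρ A B : ℝ)
    (haa : ⟪a, a⟫ = 1) (hbb : ⟪b, b⟫ = 1) (hab : ⟪a, b⟫ = ρ)
    (haw : ⟪a, w⟫ = A) (hbw : ⟪b, w⟫ = B)
    (hρ : 1/2 ≤ ρ) (hρ1 : ρ < 1) (hA : 0 ≤ A) (hBA : 0 < B - ρ * A) :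
    ∃ z : E, ⟪x, w⟫ < ⟪z, w⟫ ∧
      ∀ s : E, ‖s - x‖ ≤ 1 → ‖s - (x + (b - a))‖ ≤ 1 → ‖s - z‖ ≤ 1 := by
  have hρ0 : 0 < ρ := by linarith
  have hρsq : 0 ≤ 1 - ρ^2 := by nlinarith
  have hG : 0 ≤ (1-ρ^2)*A := mul_nonneg hρsq hA
  have hden : 0 < 2*((1-ρ^2)*A) + 1 := by linarith
  obtain ⟨β, hβ0, hβ1, hβle⟩ :
      ∃ β : ℝ, 0 < β ∧ β ≤ 1 ∧ β ≤ (B - ρ*A)/(2*((1-ρ^2)*A) + 1) :=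
    ⟨min 1 ((B - ρ*A)/(2*((1-ρ^2)*A) + 1)),
      lt_min one_pos (div_pos hBA hden), min_le_left _ _, min_le_right _ _⟩
  set D : ℝ := 1 - β^2*(1-ρ^2) with hD_def
  clear_value D
  have hβsq : β^2*(1-ρ^2) ≤ 1*(1-ρ^2) := by
    apply mul_le_mul_of_nonneg_right _ hρsq
    nlinarith
  have hDρ : ρ^2 ≤ D := by rw [hD_def]; linarith
  have hD0 : 0 ≤ D := by nlinarith [sq_nonneg ρ]
  have hD1 : D ≤ 1 := by rw [hD_def]; nlinarith
  set sd : ℝ := Real.sqrt D with hsd_def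
  have hsd_sq : sd^2 = D := Real.sq_sqrt hD0
  have hsd0 : 0 ≤ sd := Real.sqrt_nonneg D
  have hsd1 : sd ≤ 1 := Real.sqrt_le_one.2 hD1
  have hsdρ : ρ ≤ sd := by
    rw [hsd_def, ← Real.sqrt_sq hρ0.le]
    exact Real.sqrt_le_sqrt hDρ
  have hsdD : D ≤ sd := by
    have h1 : sd*sd ≤ sd*1 := mul_le_mul_of_nonneg_left hsd1 hsd0
    have h2 : sd^2 = sd*sd := sq sd
    linarith
  have hRsd : 1 - β*(1-ρ) ≤ sd := by
    have hR0 : (0:ℝ) ≤ 1 - β*(1-ρ) := by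
      have := mul_le_mul_of_nonneg_right hβ1 (by linarith : (0:ℝ) ≤ 1-ρ)
      linarith
    rw [hsd_def, Real.le_sqrt hR0 hD0]
    have expand : D - (1 - β*(1-ρ))^2 = 2*(β*((1-ρ)*(1-β))) := by rw [hD_def]; ring
    have ht : 0 ≤ β*((1-ρ)*(1-β)) :=
      mul_nonneg hβ0.le (mul_nonneg (by linarith) (by linarith))
    linarith
  clear_value sd
  set α : ℝ := -(β*ρ) + sd with hα_def
  have hα0 : 0 ≤ α := by
    have : β*ρ ≤ 1*ρ := mul_le_mul_of_nonneg_right hβ1 hρ0.le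
    rw [hα_def]; linarith
  have hαβ : 1 ≤ α + β := by rw [hα_def]; linarith
  have hnorm1 : α^2 + 2*(α*β*ρ) + β^2 = 1 := by
    have hsum : α + β*ρ = sd := by rw [hα_def]; ring
    have key : α^2 + 2*(α*β*ρ) + β^2 = (α + β*ρ)^2 + β^2*(1-ρ^2) := by ring
    rw [key, hsum, hsd_sq, hD_def]; ring
  have hheight : 0 < (α - 1)*A + β*B := by
    have hα1 : -(β*ρ) - β^2*(1-ρ^2) ≤ α - 1 := by
      have hd1 : α - 1 = sd - 1 - β*ρ := by rw [hα_def]; ring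
      rw [hD_def] at hsdD
      linarith
    have hmul1 : (-(β*ρ) - β^2*(1-ρ^2))*A ≤ (α - 1)*A :=
      mul_le_mul_of_nonneg_right hα1 hA
    have t1 : β*((1-ρ^2)*A) ≤ (B - ρ*A)/(2*((1-ρ^2)*A) + 1)*((1-ρ^2)*A) :=
      mul_le_mul_of_nonneg_right hβle hG
    have t2 : (B - ρ*A)/(2*((1-ρ^2)*A) + 1)*((1-ρ^2)*A) ≤ (B - ρ*A)/2 := by
      rw [div_mul_eq_mul_div, div_le_div_iff₀ hden two_pos]
      have hid : (B-ρ*A)*(2*((1-ρ^2)*A)+1) - (B - ρ*A)*((1-ρ^2)*A)*2 = B - ρ*A := by ring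
      linarith
    have t3 : β*(β*((1-ρ^2)*A)) ≤ β*((B - ρ*A)/2) :=
      mul_le_mul_of_nonneg_left (le_trans t1 t2) hβ0.le
    have id1 : (-(β*ρ) - β^2*(1-ρ^2))*A + β*B = β*(B - ρ*A) - β*(β*((1-ρ^2)*A)) := by ring
    have hpos : 0 < β*(B - ρ*A) := mul_pos hβ0 hBA
    linarith [hmul1, id1, t3, hpos]
  clear_value α
  refine ⟨x + ((α - 1) • a + β • b), ?_, ?_⟩
  · have hz : ⟪x + ((α - 1) • a + β • b), w⟫ = ⟪x, w⟫ + ((α-1)*A + β*B) := by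
      simp only [inner_add_left, real_inner_smul_left, haw, hbw]
      try ring
    rw [hz]; linarith
  · intro s hs1 hs2
    have hsx : s - (x + (b - a)) = (s - x + a) - b := by abel
    rw [hsx] at hs2
    have sq_le : ∀ q : E, ‖q‖ ≤ 1 → ‖q‖^2 ≤ 1 := by
      intro q hq
      have h1 : ‖q‖*‖q‖ ≤ 1*1 := mul_le_mul hq hq (norm_nonneg q) zero_le_one
      have h2 : ‖q‖^2 = ‖q‖*‖q‖ := sq _
      linarith
    have e1 : ‖(s - x + a) - a‖^2 ≤ 1 := by
      have h : (s - x + a) - a = s - x := by abel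
      rw [h]; exact sq_le _ hs1
    have e2 : ‖(s - x + a) - b‖^2 ≤ 1 := sq_le _ hs2
    have ha2 : ‖a‖^2 = 1 := by rw [← real_inner_self_eq_norm_sq, haa]
    have hb2 : ‖b‖^2 = 1 := by rw [← real_inner_self_eq_norm_sq, hbb]
    have hta : ‖s - x + a‖^2/2 ≤ ⟪s - x + a, a⟫ := by
      have h := norm_sub_sq_real (s - x + a) a
      rw [ha2] at h
      linarith
    have htb : ‖s - x + a‖^2/2 ≤ ⟪s - x + a, b⟫ := by
      have h := norm_sub_sq_real (s - x + a) b
      rw [hb2] at h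
      linarith
    have hzz : s - (x + ((α - 1) • a + β • b)) = (s - x + a) - (α • a + β • b) := by
      have h1 : (α:ℝ) • a = (α - 1) • a + a := by rw [sub_smul, one_smul]; abel
      rw [h1]; abel
    rw [hzz]
    have hba : ⟪b, a⟫ = ρ := by rw [real_inner_comm]; exact hab
    have hy2 : ‖α • a + β • b‖^2 = 1 := by
      rw [← real_inner_self_eq_norm_sq]
      rw [inner_add_left, inner_add_right, inner_add_right, real_inner_smul_left,
        real_inner_smul_left, real_inner_smul_left, real_inner_smul_left,
        real_inner_smul_right, real_inner_smul_right, real_inner_smul_right,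
        real_inner_smul_right, haa, hbb, hab, hba]
      linear_combination hnorm1
    have hty : ⟪s - x + a, α • a + β • b⟫ = α * ⟪s - x + a, a⟫ + β * ⟪s - x + a, b⟫ := by
      rw [inner_add_right, real_inner_smul_right, real_inner_smul_right]
    have hexp := norm_sub_sq_real (s - x + a) (α • a + β • b)
    rw [hy2, hty] at hexp
    have h1 : 1*(‖s - x + a‖^2/2) ≤ (α+β)*(‖s - x + a‖^2/2) :=
      mul_le_mul_of_nonneg_right hαβ (by positivity)
    have h2 : α * (‖s - x + a‖^2/2) ≤ α * ⟪s - x + a, a⟫ :=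
      mul_le_mul_of_nonneg_left hta hα0
    have h3 : β * (‖s - x + a‖^2/2) ≤ β * ⟪s - x + a, b⟫ :=
      mul_le_mul_of_nonneg_left htb hβ0.le
    have hfin : ‖(s - x + a) - (α • a + β • b)‖^2 ≤ 1 := by
      linarith [hexp, h1, h2, h3]
    linarith [hfin, sq_nonneg (‖(s - x + a) - (α • a + β • b)‖ - 1),
      norm_nonneg ((s - x + a) - (α • a + β • b))]

lemma coreA (x v w : E) (hw : ‖w‖ = 1) (hd : ‖v‖ ≤ 1)
    (h1 : ⟪v, w⟫ ≤ 0) (h2 : 1 < ‖v + w‖) :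
    ∃ z : E, ⟪x, w⟫ < ⟪z, w⟫ ∧
      ∀ s : E, ‖s - x‖ ≤ 1 → ‖s - (x + v)‖ ≤ 1 → ‖s - z‖ ≤ 1 := by
  set ℓ : ℝ := ‖v‖^2 with hℓ_def
  set μ : ℝ := ⟪v, w⟫ with hμ_def
  have hvv : ⟪v, v⟫ = ℓ := real_inner_self_eq_norm_sq v
  have hvw : ⟪v, w⟫ = μ := rfl
  have hwv : ⟪w, v⟫ = μ := (real_inner_comm v w).trans hvw
  have hww : ⟪w, w⟫ = 1 := by rw [real_inner_self_eq_norm_sq, hw]; norm_num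
  have hℓ1 : ℓ ≤ 1 := by
    have h : ‖v‖*‖v‖ ≤ 1*1 := mul_le_mul hd hd (norm_nonneg v) zero_le_one
    have h2 : ℓ = ‖v‖*‖v‖ := by rw [hℓ_def]; exact sq ‖v‖
    linarith
  have hsq : ‖v + w‖^2 = ℓ + 2*μ + 1 := by
    rw [norm_add_sq_real, hw, ← hℓ_def, ← hμ_def]; ring
  have h2sq : 1 < ‖v + w‖^2 := by nlinarith [norm_nonneg (v + w)]
  have hμ0 : μ ≤ 0 := h1
  have hμℓ : -(ℓ/2) < μ := by nlinarith
  have hℓ0 : 0 < ℓ := by linarith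
  clear_value ℓ μ
  have hμsq : μ^2 < ℓ^2/4 := by
    have h3 := mul_pos (show 0 < μ + ℓ/2 by linarith) (show 0 < ℓ/2 - μ by linarith)
    nlinarith
  have hq : μ^2/ℓ < ℓ/4 := by
    rw [div_lt_iff₀ hℓ0]
    nlinarith
  have hq0 : 0 ≤ μ^2/ℓ := div_nonneg (sq_nonneg μ) hℓ0.le
  set τ : ℝ := Real.sqrt (1 - μ^2/ℓ) with hτ_def
  have hτsq : τ^2 = 1 - μ^2/ℓ := Real.sq_sqrt (by linarith)
  have hτ0 : 0 < τ := Real.sqrt_pos.2 (by linarith)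
  set s₁ : ℝ := Real.sqrt (1 - ℓ/4) with hs₁_def
  have hs₁sq : s₁^2 = 1 - ℓ/4 := Real.sq_sqrt (by linarith)
  have hs₁0 : 0 < s₁ := Real.sqrt_pos.2 (by linarith)
  have hτs₁ : s₁ ≤ τ := Real.sqrt_le_sqrt (by linarith)
  clear_value τ s₁
  -- the orthogonal unit vector e
  have hw'v : ⟪v, w - (μ/ℓ) • v⟫ = 0 := by
    rw [inner_sub_right, real_inner_smul_right, hvv, hvw]
    field_simp
    ring
  have hw'w' : ⟪w - (μ/ℓ) • v, w - (μ/ℓ) • v⟫ = 1 - μ^2/ℓ := by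
    rw [inner_sub_left, inner_sub_right, inner_sub_right, real_inner_smul_left,
      real_inner_smul_left, real_inner_smul_right, real_inner_smul_right,
      hvv, hvw, hwv, hww]
    field_simp
    ring
  have hw'w : ⟪w - (μ/ℓ) • v, w⟫ = 1 - μ^2/ℓ := by
    rw [inner_sub_left, real_inner_smul_left, hvw, hww]
    field_simp
  set e : E := τ⁻¹ • (w - (μ/ℓ) • v) with he_def
  have hve : ⟪v, e⟫ = 0 := by rw [he_def, real_inner_smul_right, hw'v, mul_zero]
  have hev : ⟪e, v⟫ = 0 := by rw [real_inner_comm]; exact hve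
  have hee : ⟪e, e⟫ = 1 := by
    rw [he_def, real_inner_smul_left, real_inner_smul_right, hw'w', ← hτsq]
    rw [sq]
    field_simp
  have hew : ⟪e, w⟫ = τ := by
    rw [he_def, real_inner_smul_left, hw'w, ← hτsq, sq]
    field_simp
  clear_value e
  -- the two unit vectors a, b with b - a = v
  have expand : ∀ r₁ r₂ r₃ r₄ : ℝ,
      ⟪r₁ • v + r₂ • e, r₃ • v + r₄ • e⟫ = r₁*r₃*ℓ + r₂*r₄ := by
    intro r₁ r₂ r₃ r₄
    simp only [inner_add_left, inner_add_right, real_inner_smul_left,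
      real_inner_smul_right, hvv, hve, hev, hee]
    ring
  have expandw : ∀ r₁ r₂ : ℝ, ⟪r₁ • v + r₂ • e, w⟫ = r₁*μ + r₂*τ := by
    intro r₁ r₂
    simp only [inner_add_left, real_inner_smul_left, hvw, hew]
  have hba : ((2⁻¹:ℝ) • v + s₁ • e) - ((-(2⁻¹:ℝ)) • v + s₁ • e) = v := by
    have : ((2⁻¹:ℝ) • v + s₁ • e) - ((-(2⁻¹:ℝ)) • v + s₁ • e)
        = ((2⁻¹:ℝ) - (-(2⁻¹:ℝ))) • v := by
      rw [sub_smul]; abel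
    rw [this]
    norm_num
  have hss : s₁*s₁ ≤ s₁*τ := mul_le_mul_of_nonneg_left hτs₁ hs₁0.le
  have hs₁s₁ : s₁*s₁ = 1 - ℓ/4 := by rw [← sq]; exact hs₁sq
  obtain ⟨z, hz1, hz2⟩ := coreB x ((-(2⁻¹:ℝ)) • v + s₁ • e) ((2⁻¹:ℝ) • v + s₁ • e) w
    (1 - ℓ/2) (-(μ/2) + s₁*τ) (μ/2 + s₁*τ)
    (by rw [expand]; linear_combination hs₁sq)
    (by rw [expand]; linear_combination hs₁sq)
    (by rw [expand]; linear_combination hs₁sq)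
    (by rw [expandw]; ring)
    (by rw [expandw]; ring)
    (by linarith)
    (by linarith)
    (by nlinarith [mul_pos hs₁0 hτ0])
    (by
      have id1 : (μ/2 + s₁*τ) - (1-ℓ/2)*(-(μ/2) + s₁*τ)
          = μ*(1-ℓ/4) + (ℓ/2)*(s₁*τ) := by ring
      have h5 : (ℓ/2)*(s₁*s₁) ≤ (ℓ/2)*(s₁*τ) := mul_le_mul_of_nonneg_left hss (by linarith)
      have hfac : 0 < (1 - ℓ/4)*(μ + ℓ/2) := mul_pos (by linarith) (by linarith)
      nlinarith)
  refine ⟨z, hz1, fun s hs1 hs2 => hz2 s hs1 ?_⟩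
  rw [hba]
  exact hs2

end CoreGeometry

lemma suppFn_max {n : ℕ} {K : Set (EuclideanSpace ℝ (Fin n))} (hne : K.Nonempty)
    (hcomp : IsCompact K) (u : EuclideanSpace ℝ (Fin n)) :
    ∃ x ∈ K, suppFn K u = ⟪x, u⟫ ∧ ∀ p ∈ K, ⟪p, u⟫ ≤ ⟪x, u⟫ := by
  obtain ⟨x, hxK, hmax⟩ := hcomp.exists_isMaxOn hne
    ((continuous_id.inner continuous_const).continuousOn :
      ContinuousOn (fun p : EuclideanSpace ℝ (Fin n) => (⟪p, u⟫ : ℝ)) K)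
  refine ⟨x, hxK, ?_, fun p hp => hmax hp⟩
  apply IsGreatest.csSup_eq
  exact ⟨⟨x, hxK, rfl⟩, by rintro r ⟨p, hp, rfl⟩; exact hmax hp⟩

/-- A nonempty compact convex `K ⊆ ℝⁿ` has constant width `1`
(`h_K(u) + h_K(-u) = 1` for all unit `u`) iff `K^c = K`. -/
theorem stmt3 (n : ℕ) (hn : 1 ≤ n) (K : Set (EuclideanSpace ℝ (Fin n)))
    (hne : K.Nonempty) (hcomp : IsCompact K) (hconv : Convex ℝ K) :
    (∀ u : EuclideanSpace ℝ (Fin n), ‖u‖ = 1 → suppFn K u + suppFn K (-u) = 1) ↔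
      cDual K = K := by
  constructor
  · intro hcw
    apply Set.Subset.antisymm
    · -- cDual K ⊆ K
      intro y hy
      by_contra hyK
      obtain ⟨f, c, hfc, hcy⟩ := geometric_hahn_banach_closed_point hconv hcomp.isClosed hyK
      set g := (InnerProductSpace.toDual ℝ (EuclideanSpace ℝ (Fin n))).symm f with hg_def
      have hg : ∀ z, ⟪g, z⟫ = f z := by
        intro z
        rw [← InnerProductSpace.toDual_apply_apply, hg_def,
          LinearIsometryEquiv.apply_symm_apply]
      have hg0 : g ≠ 0 := by
        intro h0
        obtain ⟨x₀, hx₀⟩ := hne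
        have h1 : f x₀ < c := hfc x₀ hx₀
        have h2 : f y = 0 := by rw [← hg y, h0]; simp
        have h3 : f x₀ = 0 := by rw [← hg x₀, h0]; simp
        linarith
      have hgn : 0 < ‖g‖ := norm_pos_iff.2 hg0
      set u := ‖g‖⁻¹ • g with hu_def
      have hu : ‖u‖ = 1 := by
        rw [hu_def, norm_smul, norm_inv, norm_norm]
        field_simp
      have hinner : ∀ z, ⟪z, u⟫ = ‖g‖⁻¹ * f z := by
        intro z
        rw [hu_def, real_inner_smul_right, real_inner_comm, hg]
      have hKu := hcw u hu
      obtain ⟨x₁, hx₁K, hx₁eq, hx₁max⟩ := suppFn_max hne hcomp u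
      obtain ⟨x₂, hx₂K, hx₂eq, hx₂max⟩ := suppFn_max hne hcomp (-u)
      have hyu : suppFn K u < ⟪y, u⟫ := by
        rw [hx₁eq, hinner x₁, hinner y]
        have h1 : f x₁ < c := hfc x₁ hx₁K
        have h2 : f x₁ < f y := lt_trans h1 hcy
        exact mul_lt_mul_of_pos_left h2 (inv_pos.2 hgn)
      have hx₂u : ⟪x₂, u⟫ = suppFn K u - 1 := by
        have h1 : ⟪x₂, -u⟫ = suppFn K (-u) := hx₂eq.symm
        rw [inner_neg_right] at h1
        linarith
      have hbig : 1 < ⟪y - x₂, u⟫ := by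
        rw [inner_sub_left]
        linarith
      have hCS : ⟪y - x₂, u⟫ ≤ ‖y - x₂‖ := by
        have := real_inner_le_norm (y - x₂) u
        rw [hu] at this
        linarith [this]
      have hdist : ‖x₂ - y‖ ≤ 1 := hy x₂ hx₂K
      rw [norm_sub_rev] at hdist
      linarith
    · -- K ⊆ cDual K
      intro x hx p hp
      by_cases hpx : p = x
      · simp [hpx]
      have hpx0 : p - x ≠ 0 := sub_ne_zero.2 hpx
      have hn0 : 0 < ‖p - x‖ := norm_pos_iff.2 hpx0
      set u := ‖p - x‖⁻¹ • (p - x) with hu_def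
      have hu : ‖u‖ = 1 := by
        rw [hu_def, norm_smul, norm_inv, norm_norm]
        field_simp
      obtain ⟨x₁, hx₁K, hx₁eq, hx₁max⟩ := suppFn_max hne hcomp u
      obtain ⟨x₂, hx₂K, hx₂eq, hx₂max⟩ := suppFn_max hne hcomp (-u)
      have h1 : ⟪p, u⟫ ≤ suppFn K u := by rw [hx₁eq]; exact hx₁max p hp
      have h2 : ⟪x, -u⟫ ≤ suppFn K (-u) := by rw [hx₂eq]; exact hx₂max x hx
      have h3 : ⟪p, u⟫ + ⟪x, -u⟫ = ‖p - x‖ := by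
        rw [inner_neg_right]
        have h4 : ⟪p, u⟫ - ⟪x, u⟫ = ⟪p - x, u⟫ := (inner_sub_left _ _ _).symm
        have h5 : ⟪p - x, u⟫ = ‖p - x‖⁻¹ * ⟪p - x, p - x⟫ := by
          rw [hu_def, real_inner_smul_right]
        rw [real_inner_self_eq_norm_sq] at h5
        have h6 : ‖p - x‖⁻¹ * ‖p - x‖ ^ 2 = ‖p - x‖ := by
          field_simp
        linarith
      have := hcw u hu
      linarith
  · intro hdual u hu
    have hdiam : ∀ p q : EuclideanSpace ℝ (Fin n), p ∈ K → q ∈ K → ‖p - q‖ ≤ 1 := by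
      intro p q hp hq
      have hq' : q ∈ cDual K := hdual.symm ▸ hq
      exact hq' p hp
    obtain ⟨x, hxK, hxeq, hxmax⟩ := suppFn_max hne hcomp u
    have hxu : x - u ∈ K := by
      by_contra hxu
      have hxu' : x - u ∉ cDual K := by rwa [hdual]
      have hex : ∃ p ∈ K, 1 < ‖p - (x - u)‖ := by
        by_contra hcon
        push_neg at hcon
        exact hxu' (fun p hp => hcon p hp)
      obtain ⟨p, hpK, hp⟩ := hex
      have h2 : 1 < ‖p - x + u‖ := by
        have h3 : p - (x - u) = p - x + u := by abel
        rwa [h3] at hp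
      have h1 : ⟪p - x, u⟫ ≤ 0 := by
        rw [inner_sub_left]
        linarith [hxmax p hpK]
      obtain ⟨z, hz1, hz2⟩ := coreA x (p - x) u hu (hdiam p x hpK hxK) h1 h2
      have hzK : z ∈ K := by
        rw [← hdual]
        intro q hqK
        have hq1 : ‖q - x‖ ≤ 1 := hdiam q x hqK hxK
        have hq2 : ‖q - (x + (p - x))‖ ≤ 1 := by
          have h4 : x + (p - x) = p := by abel
          rw [h4]
          exact hdiam q p hqK hpK
        exact hz2 q hq1 hq2
      linarith [hxmax z hzK, hz1]
    obtain ⟨x', hx'K, hx'eq, hx'max⟩ := suppFn_max hne hcomp (-u)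
    have huu : ⟪u, u⟫ = 1 := by rw [real_inner_self_eq_norm_sq, hu]; norm_num
    have hge : 1 - ⟪x, u⟫ ≤ suppFn K (-u) := by
      have h1 : ⟪x - u, -u⟫ ≤ ⟪x', -u⟫ := hx'max _ hxu
      rw [inner_neg_right, inner_neg_right, inner_sub_left, huu] at h1
      rw [hx'eq, inner_neg_right]
      linarith
    have hle : suppFn K u + suppFn K (-u) ≤ 1 := by
      rw [hxeq, hx'eq]
      have h1 : ⟪x, u⟫ + ⟪x', -u⟫ = ⟪x - x', u⟫ := by
        rw [inner_neg_right, inner_sub_left]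
        ring
      have h2 : ⟪x - x', u⟫ ≤ ‖x - x'‖ := by
        have := real_inner_le_norm (x - x') u
        rw [hu] at this
        linarith
      linarith [hdiam x x' hxK hx'K]
    rw [hxeq] at *
    linarith
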